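/- With the optimal bandwidth choice, the optimal MSE for g epochs with total sample size N satisfies MSE(N/g, g) = C_* (g ψ'(g))^{4/5} N^{−4/5}; since g ↦ g ψ'(g) is decreasing in g, MSE(N/g, g) is a decreasing function of the number of epochs g. -/

import Mathlib

open Real

/-- The trigamma function, `ψ'(x) = ∑_{k≥0} 1/(x+k)²`. -/
noncomputable def trigamma (x : ℝ) : ℝ := ∑' k : ℕ, 1 / (x + k) ^ 2

lemma summable_trigamma {x : ℝ} (hx : 1 ≤ x) :
    Summable (fun k : ℕ => 1 / (x + k) ^ 2) := by
  have hbase : Summable (fun k : ℕ => 1 / ((k : ℝ) + 1) ^ 2) := by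
    have := (Real.summable_one_div_nat_pow (p := 2)).mpr one_lt_two
    have h := (summable_nat_add_iff (f := fun n : ℕ => 1 / (n : ℝ) ^ 2) 1).mpr this
    simpa [Nat.cast_add] using h
  refine Summable.of_nonneg_of_le (fun k => by positivity) (fun k => ?_) hbase
  have h1 : (0 : ℝ) < (k : ℝ) + 1 := by positivity
  have h2 : (k : ℝ) + 1 ≤ x + k := by linarith
  gcongr

lemma trigamma_pos {x : ℝ} (hx : 1 ≤ x) : 0 < trigamma x := by
  have hx0 : 0 < x := lt_of_lt_of_le one_pos hx
  refine Summable.tsum_pos (summable_trigamma hx) (fun k => by positivity) 0 ?_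
  have : (0:ℝ) < x + (0:ℕ) := by simpa using hx0
  positivity

lemma trigamma_rec {x : ℝ} (hx : 1 ≤ x) :
    trigamma x = 1 / x ^ 2 + trigamma (x + 1) := by
  have hsum := summable_trigamma hx
  have h := Summable.tsum_eq_zero_add hsum
  simp only [Nat.cast_zero, add_zero] at h
  rw [trigamma, h, trigamma]
  congr 1
  exact tsum_congr fun k => by push_cast; ring_nf

/-- telescoping: ∑' k, (1/(x+k) - 1/(x+k+1)) = 1/x, stated via HasSum. -/
lemma hasSum_telescope {x : ℝ} (hx : 1 ≤ x) :
    HasSum (fun k : ℕ => 1 / ((x + k) * (x + k + 1))) (1 / x) := by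
  have hx0 : 0 < x := lt_of_lt_of_le one_pos hx
  have hpos : ∀ k : ℕ, (0:ℝ) < x + k := fun k => by positivity
  have hf : ∀ k : ℕ, 1 / ((x + k) * (x + k + 1)) = 1 / (x + k) - 1 / (x + k + 1) := by
    intro k
    have h1 := (hpos k).ne'
    have h2 : (x + k + 1) ≠ 0 := by positivity
    field_simp
    ring
  have hnonneg : ∀ k : ℕ, (0:ℝ) ≤ 1 / ((x + k) * (x + k + 1)) := fun k => by positivity
  rw [(hasSum_iff_tendsto_nat_of_nonneg hnonneg _)]
  have hsum : ∀ n : ℕ, ∑ i ∈ Finset.range n, 1 / ((x + i) * (x + i + 1))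
      = 1 / x - 1 / (x + n) := by
    intro n
    induction n with
    | zero => simp
    | succ n ih =>
      rw [Finset.sum_range_succ, ih, hf n]
      push_cast
      ring
  simp only [hsum]
  have htend : Filter.Tendsto (fun n : ℕ => 1 / (x + n)) Filter.atTop (nhds 0) := by
    have h1 : Filter.Tendsto (fun n : ℕ => x + (n:ℝ)) Filter.atTop Filter.atTop :=
      Filter.tendsto_atTop_add_const_left _ x tendsto_natCast_atTop_atTop
    simpa [one_div, Function.comp_def] using tendsto_inv_atTop_zero.comp h1
  have := Filter.Tendsto.const_sub (1 / x) htend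
  simpa using this

lemma trigamma_succ_lt {x : ℝ} (hx : 1 ≤ x) : trigamma (x + 1) < 1 / x := by
  have hx0 : 0 < x := lt_of_lt_of_le one_pos hx
  have hpos : ∀ k : ℕ, (0:ℝ) < x + k := fun k => by positivity
  have htele := hasSum_telescope hx
  rw [trigamma, ← htele.tsum_eq]
  refine Summable.tsum_lt_tsum (i := 0) (fun k => ?_) ?_ (summable_trigamma (by linarith)) htele.summable
  · have h1 : (0:ℝ) < x + k := hpos k
    have h2 : x + k < x + 1 + k := by linarith
    calc 1 / (x + 1 + (k:ℝ)) ^ 2 ≤ 1 / ((x + k) * (x + 1 + k)) := by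
          rw [sq]
          exact one_div_le_one_div_of_le (by positivity) (by nlinarith)
      _ = 1 / ((x + k) * (x + k + 1)) := by ring_nf
  · simp only [Nat.cast_zero, add_zero]
    rw [sq]
    exact one_div_lt_one_div_of_lt (by positivity) (by nlinarith)

/-- `x ↦ x ψ'(x)` strictly decreasing step. -/
lemma step_lt {x : ℝ} (hx : 1 ≤ x) :
    (x + 1) * trigamma (x + 1) < x * trigamma x := by
  have hx0 : 0 < x := lt_of_lt_of_le one_pos hx
  have hrec := trigamma_rec hx
  have hlt := trigamma_succ_lt hx
  have : x * trigamma x = 1 / x + x * trigamma (x + 1) := by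
    rw [hrec]; field_simp
  rw [this]
  nlinarith [trigamma_pos (show (1:ℝ) ≤ x + 1 by linarith)]

lemma gmul_lt {g₁ g₂ : ℕ} (h1 : 1 ≤ g₁) (h12 : g₁ < g₂) :
    (g₂ : ℝ) * trigamma g₂ < (g₁ : ℝ) * trigamma g₁ := by
  induction g₂ with
  | zero => omega
  | succ n ih =>
    rcases Nat.lt_or_ge g₁ n with h | h
    · have hn1 : (1:ℝ) ≤ (n:ℝ) := by
        have : 1 ≤ n := by omega
        exact_mod_cast this
      calc ((n+1 : ℕ) : ℝ) * trigamma ((n+1 : ℕ)) < (n:ℝ) * trigamma n := by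
            have := step_lt hn1
            push_cast
            convert this using 3
        _ < (g₁ : ℝ) * trigamma g₁ := ih h
    · have : g₁ = n := by omega
      subst this
      have hn1 : (1:ℝ) ≤ (g₁:ℝ) := by exact_mod_cast h1
      have := step_lt hn1
      push_cast
      convert this using 3

/-- With the optimal bandwidth, the optimal MSE with `g` epochs and total sample size `N`
satisfies `MSE(N/g, g) = C_* (g ψ'(g))^{4/5} N^{−4/5}`, and since `g ↦ g ψ'(g)` is
decreasing, `g ↦ MSE(N/g, g)` is a decreasing function of the number of epochs. -/
theorem mse_epochs_decreasing (Cstar : ℝ) (hC : 0 < Cstar) (N : ℝ) (hN : 0 < N) :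
    let MSE : ℝ → ℝ → ℝ := fun n g => Cstar * trigamma g ^ ((4 : ℝ) / 5) * n ^ (-(4 : ℝ) / 5)
    (∀ g : ℕ, 1 ≤ g →
      MSE (N / g) g = Cstar * ((g : ℝ) * trigamma g) ^ ((4 : ℝ) / 5) * N ^ (-(4 : ℝ) / 5)) ∧
    (∀ g₁ g₂ : ℕ, 1 ≤ g₁ → g₁ < g₂ → MSE (N / g₂) g₂ < MSE (N / g₁) g₁) := by
  intro MSE
  have key : ∀ g : ℕ, 1 ≤ g →
      MSE (N / g) g = Cstar * ((g : ℝ) * trigamma g) ^ ((4 : ℝ) / 5) * N ^ (-(4 : ℝ) / 5) := by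
    intro g hg
    have hg0 : (0:ℝ) < (g:ℝ) := by exact_mod_cast Nat.lt_of_lt_of_le Nat.zero_lt_one hg
    have hg1 : (1:ℝ) ≤ (g:ℝ) := by exact_mod_cast hg
    have ht : 0 < trigamma g := trigamma_pos hg1
    show Cstar * trigamma g ^ ((4 : ℝ) / 5) * (N / g) ^ (-(4 : ℝ) / 5) = _
    have he : (-(4:ℝ)/5) = -((4:ℝ)/5) := by norm_num
    rw [he, Real.div_rpow hN.le hg0.le, Real.mul_rpow hg0.le ht.le,
      Real.rpow_neg hN.le, Real.rpow_neg hg0.le]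
    have hgp : (0:ℝ) < (g:ℝ) ^ ((4:ℝ)/5) := Real.rpow_pos_of_pos hg0 _
    field_simp
  refine ⟨key, fun g₁ g₂ h1 h12 => ?_⟩
  rw [key g₁ h1, key g₂ (by omega)]
  have h2 : 1 ≤ g₂ := by omega
  have hg1R : (1:ℝ) ≤ (g₁:ℝ) := by exact_mod_cast h1
  have hg2R : (1:ℝ) ≤ (g₂:ℝ) := by exact_mod_cast h2
  have hA2 : 0 < (g₂:ℝ) * trigamma g₂ := by
    have := trigamma_pos hg2R; nlinarith
  have hlt := gmul_lt h1 h12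
  have hrp : ((g₂:ℝ) * trigamma g₂) ^ ((4:ℝ)/5) < ((g₁:ℝ) * trigamma g₁) ^ ((4:ℝ)/5) :=
    Real.rpow_lt_rpow hA2.le hlt (by norm_num)
  have hNpos : (0:ℝ) < N ^ (-(4:ℝ)/5) := Real.rpow_pos_of_pos hN _
  have := mul_lt_mul_of_pos_right hrp hNpos
  calc Cstar * ((g₂:ℝ) * trigamma g₂) ^ ((4:ℝ)/5) * N ^ (-(4:ℝ)/5)
      = Cstar * (((g₂:ℝ) * trigamma g₂) ^ ((4:ℝ)/5) * N ^ (-(4:ℝ)/5)) := by ring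
    _ < Cstar * (((g₁:ℝ) * trigamma g₁) ^ ((4:ℝ)/5) * N ^ (-(4:ℝ)/5)) := by
        exact mul_lt_mul_of_pos_left this hC
    _ = Cstar * ((g₁:ℝ) * trigamma g₁) ^ ((4:ℝ)/5) * N ^ (-(4:ℝ)/5) := by ring
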